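/- arXiv:1011.4597 — 5 statements merged into one kernel-verified Lean document; each statement's English description precedes it below -/
import Mathlib

section
/- For the function φ_n(y) = y^n/(n-1)! - Σ_{i=0}^{n-1} y^i/i!, defined for integer n ≥ 1, the equation φ_n(y) = 0 has a unique positive solution. -/
/-- For `n ≥ 1`, the equation `φ_n(y) = y^n/(n-1)! - ∑_{i=0}^{n-1} y^i/i! = 0`
has a unique positive solution. -/
theorem unique_positive_root_phi (n : ℕ) (hn : 1 ≤ n) :
    ∃! y : ℝ, 0 < y ∧
      y ^ n / (Nat.factorial (n - 1)) - ∑ i ∈ Finset.range n, y ^ i / (Nat.factorial i) = 0 := by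
  set c : ℕ → ℝ := fun i => (Nat.factorial (n - 1) : ℝ) / (Nat.factorial i) with hc
  have hcpos : ∀ i, 0 < c i := fun i => by
    simp only [hc]; positivity
  have hfac : (Nat.factorial (n - 1) : ℝ) ≠ 0 := by positivity
  -- reformulate the equation
  have key : ∀ y : ℝ,
      (y ^ n / (Nat.factorial (n - 1)) - ∑ i ∈ Finset.range n, y ^ i / (Nat.factorial i) = 0)
      ↔ y ^ n = ∑ i ∈ Finset.range n, c i * y ^ i := by
    intro y
    rw [sub_eq_zero, div_eq_iff hfac, Finset.sum_mul]
    have : ∀ i ∈ Finset.range n, y ^ i / (Nat.factorial i : ℝ) * (Nat.factorial (n - 1) : ℝ)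
        = c i * y ^ i := by
      intro i _
      simp only [hc]
      field_simp
    rw [Finset.sum_congr rfl this]
  -- strict comparison: no two distinct positive roots
  have mono : ∀ a b : ℝ, 0 < a → a < b →
      a ^ n = ∑ i ∈ Finset.range n, c i * a ^ i →
      b ^ n = ∑ i ∈ Finset.range n, c i * b ^ i → False := by
    intro a b ha hab haa hbb
    have hb : 0 < b := ha.trans hab
    have hne : (Finset.range n).Nonempty := by
      rw [Finset.nonempty_range_iff]; omega
    have hlt : ∑ i ∈ Finset.range n, c i * b ^ i * a ^ n
        < ∑ i ∈ Finset.range n, c i * a ^ i * b ^ n := by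
      apply Finset.sum_lt_sum_of_nonempty hne
      intro i hi
      have hi' : i < n := Finset.mem_range.mp hi
      obtain ⟨k, hk⟩ : ∃ k, n = i + (k + 1) := ⟨n - i - 1, by omega⟩
      have h1 : a ^ (k + 1) < b ^ (k + 1) :=
        pow_lt_pow_left₀ hab ha.le (Nat.succ_ne_zero k)
      have h2 : (0 : ℝ) < a ^ i * b ^ i := by positivity
      have h3 := mul_lt_mul_of_pos_left h1 h2
      have hci := hcpos i
      have ea : a ^ n = a ^ i * a ^ (k + 1) := by rw [hk, pow_add]
      have eb : b ^ n = b ^ i * b ^ (k + 1) := by rw [hk, pow_add]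
      rw [ea, eb]
      nlinarith [mul_lt_mul_of_pos_left h3 hci]
    have e1 : ∑ i ∈ Finset.range n, c i * b ^ i * a ^ n = b ^ n * a ^ n := by
      rw [← Finset.sum_mul, ← hbb]
    have e2 : ∑ i ∈ Finset.range n, c i * a ^ i * b ^ n = a ^ n * b ^ n := by
      rw [← Finset.sum_mul, ← haa]
    rw [e1, e2] at hlt
    nlinarith [hlt]
  -- existence via IVT
  set S : ℝ := ∑ i ∈ Finset.range n, c i with hS
  have hS0 : 0 ≤ S := Finset.sum_nonneg fun i _ => (hcpos i).le
  set M : ℝ := S + 1 with hM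
  have hM1 : (1 : ℝ) ≤ M := by linarith
  have hMlt : S < M := by linarith
  have hcont : ContinuousOn (fun y : ℝ => y ^ n - ∑ i ∈ Finset.range n, c i * y ^ i)
      (Set.Icc (1/2 : ℝ) M) := by
    apply Continuous.continuousOn
    fun_prop
  have h0mem : (0 : ℕ) ∈ Finset.range n := Finset.mem_range.mpr (by omega)
  have hc0 : (1 : ℝ) ≤ c 0 := by
    simp only [hc, Nat.factorial_zero, Nat.cast_one, div_one]
    exact_mod_cast Nat.one_le_iff_ne_zero.mpr (Nat.factorial_ne_zero (n - 1))
  have hFa : (fun y : ℝ => y ^ n - ∑ i ∈ Finset.range n, c i * y ^ i) (1/2) ≤ 0 := by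
    simp only
    have hsingle : c 0 * (1/2 : ℝ) ^ 0 ≤ ∑ i ∈ Finset.range n, c i * (1/2 : ℝ) ^ i :=
      Finset.single_le_sum (f := fun i => c i * (1/2 : ℝ) ^ i)
        (fun i _ => by positivity) h0mem
    have hpow : ((1 : ℝ)/2) ^ n ≤ 1 := pow_le_one₀ (by norm_num) (by norm_num)
    simp only [pow_zero, mul_one] at hsingle
    linarith
  have hFb : 0 ≤ (fun y : ℝ => y ^ n - ∑ i ∈ Finset.range n, c i * y ^ i) M := by
    simp only
    have hsum : ∑ i ∈ Finset.range n, c i * M ^ i ≤ S * M ^ (n - 1) := by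
      rw [hS, Finset.sum_mul]
      apply Finset.sum_le_sum
      intro i hi
      have hi' : i < n := Finset.mem_range.mp hi
      have : M ^ i ≤ M ^ (n - 1) := pow_le_pow_right₀ hM1 (by omega)
      have hci := (hcpos i).le
      nlinarith
    have hMn : M ^ n = M ^ (n - 1) * M := by
      rw [← pow_succ]
      congr 1
      omega
    have hMpow : 0 < M ^ (n - 1) := pow_pos (by linarith) _
    have : S * M ^ (n - 1) < M * M ^ (n - 1) := by
      apply mul_lt_mul_of_pos_right hMlt hMpow
    nlinarith
  have h12M : (1/2 : ℝ) ≤ M := by linarith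
  obtain ⟨y, hy_mem, hFy⟩ := intermediate_value_Icc h12M hcont ⟨hFa, hFb⟩
  have hy_pos : 0 < y := lt_of_lt_of_le (by norm_num) hy_mem.1
  have hy_root : y ^ n = ∑ i ∈ Finset.range n, c i * y ^ i := by
    have := hFy
    simp only at this
    linarith [this]
  refine ⟨y, ⟨hy_pos, (key y).mpr hy_root⟩, ?_⟩
  rintro z ⟨hz_pos, hz_eq⟩
  have hz_root := (key z).mp hz_eq
  rcases lt_trichotomy z y with h | h | h
  · exact absurd (mono z y hz_pos h hz_root hy_root) not_false
  · exact h
  · exact absurd (mono y z hy_pos h hy_root hz_root) not_false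
end

section
/- Let c > 0, n ≥ 1, and f(p) = (1/p) · e^{-c/p} · Σ_{i=0}^{n-1} (c/p)^i/i! on (0,∞). Then f'(p) = (e^{-c/p}/p^2) · [ (c/p)^n/(n-1)! - Σ_{i=0}^{n-1} (c/p)^i/i! ]. Hence f is strictly increasing on (0, c/y_n) and strictly decreasing on (c/y_n, ∞), where y_n is the unique positive root of y^n/(n-1)! = Σ_{i=0}^{n-1} y^i/i!; in particular f attains a unique global maximum at p* = c/y_n. -/
open Real Set


private lemma sum_hasDerivAt (m : ℕ) (y : ℝ) :
    HasDerivAt (fun y : ℝ => ∑ i ∈ Finset.range (m+1), y ^ i / (Nat.factorial i))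
      ((∑ i ∈ Finset.range (m+1), y ^ i / (Nat.factorial i)) - y ^ m / (Nat.factorial m)) y := by
  have h : HasDerivAt (fun y : ℝ => ∑ i ∈ Finset.range (m+1), y ^ i / (Nat.factorial i))
      (∑ i ∈ Finset.range (m+1), (i : ℝ) * y ^ (i-1) / (Nat.factorial i)) y := by
    apply HasDerivAt.fun_sum
    intro i _
    exact (hasDerivAt_pow i y).div_const (Nat.factorial i)
  convert h using 1
  rw [Finset.sum_range_succ' (fun i => (i : ℝ) * y ^ (i-1) / (Nat.factorial i)) m,
    Finset.sum_range_succ (fun i => y ^ i / (Nat.factorial i)) m]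
  simp only [Nat.cast_zero, zero_mul, zero_div, add_zero, Nat.add_sub_cancel]
  rw [add_sub_cancel_right]
  refine Finset.sum_congr rfl fun i _ => ?_
  have hfi : ((Nat.factorial i : ℝ)) ≠ 0 := Nat.cast_ne_zero.mpr (Nat.factorial_ne_zero i)
  rw [Nat.factorial_succ]
  push_cast
  field_simp

private lemma f_hasDerivAt (c : ℝ) (hc : 0 < c) (m : ℕ) (p : ℝ) (hp : 0 < p) :
    HasDerivAt (fun p : ℝ => (1 / p) * Real.exp (-c / p) *
        ∑ i ∈ Finset.range (m+1), (c / p) ^ i / (Nat.factorial i))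
      (Real.exp (-c / p) / p ^ 2 *
        ((c / p) ^ (m+1) / (Nat.factorial m)
          - ∑ i ∈ Finset.range (m+1), (c / p) ^ i / (Nat.factorial i))) p := by
  have hp0 : p ≠ 0 := hp.ne'
  have hinv : HasDerivAt (fun p : ℝ => 1 / p) (-(1 / p ^ 2)) p := by
    simpa [one_div] using hasDerivAt_inv hp0
  have hcp : HasDerivAt (fun p : ℝ => c / p) (-(c / p ^ 2)) p := by
    have := (hasDerivAt_inv hp0).const_mul c
    simpa [div_eq_mul_inv, mul_neg] using this
  have hexp : HasDerivAt (fun p : ℝ => Real.exp (-c / p)) (Real.exp (-c / p) * (c / p ^ 2)) p := by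
    have h1 : HasDerivAt (fun p : ℝ => -c / p) (c / p ^ 2) p := by
      simpa [neg_div] using hcp.fun_neg
    simpa using h1.exp
  have hS : HasDerivAt (fun p : ℝ => ∑ i ∈ Finset.range (m+1), (c / p) ^ i / (Nat.factorial i))
      (((∑ i ∈ Finset.range (m+1), (c / p) ^ i / (Nat.factorial i))
        - (c / p) ^ m / (Nat.factorial m)) * (-(c / p ^ 2))) p :=
    (sum_hasDerivAt m (c / p)).comp p hcp
  have := (hinv.fun_mul hexp).fun_mul hS
  refine this.congr_deriv ?_
  have hfac : ((Nat.factorial m : ℝ)) ≠ 0 := Nat.cast_ne_zero.mpr (Nat.factorial_ne_zero m)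
  field_simp
  linear_combination (-(c * c ^ m * p⁻¹ ^ m)) * mul_inv_cancel₀ hp0

private lemma key_sign (m : ℕ) (yn : ℝ) (hyn : 0 < yn)
    (hroot : yn ^ (m+1) / (Nat.factorial m)
      = ∑ i ∈ Finset.range (m+1), yn ^ i / (Nat.factorial i))
    (huniq : ∀ y : ℝ, 0 < y →
      y ^ (m+1) / (Nat.factorial m) = ∑ i ∈ Finset.range (m+1), y ^ i / (Nat.factorial i) →
      y = yn) :
    (∀ y : ℝ, 0 < y → y < yn →
      y ^ (m+1) / (Nat.factorial m) < ∑ i ∈ Finset.range (m+1), y ^ i / (Nat.factorial i)) ∧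
    (∀ y : ℝ, yn < y →
      (∑ i ∈ Finset.range (m+1), y ^ i / (Nat.factorial i)) < y ^ (m+1) / (Nat.factorial m)) := by
  set h : ℝ → ℝ := fun y =>
    y ^ (m+1) / (Nat.factorial m) - ∑ i ∈ Finset.range (m+1), y ^ i / (Nat.factorial i) with hh
  have hcont : Continuous h := by
    apply Continuous.sub
    · exact (continuous_pow _).div_const _
    · exact continuous_finset_sum _ fun i _ => (continuous_pow _).div_const _
  have h0 : h 0 = -1 := by
    simp [hh, Finset.sum_range_succ', pow_succ]
  have hroot' : ∀ z : ℝ, 0 < z → h z = 0 → z = yn := by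
    intro z hz hz0
    exact huniq z hz (by simpa [hh, sub_eq_zero] using hz0)
  constructor
  · intro y hy hylt
    by_contra hcon
    push_neg at hcon
    have hcon' : 0 ≤ h y := by simp only [hh]; linarith
    rcases eq_or_lt_of_le hcon' with heq | hpos
    · exact absurd (hroot' y hy heq.symm) (ne_of_lt hylt)
    · -- find a small point with h < 0
      have hev : ∀ᶠ x in nhds (0:ℝ), h x < 0 := by
        have : ContinuousAt h 0 := hcont.continuousAt
        have := this.eventually_lt_const (by rw [h0]; norm_num : h 0 < 0)
        exact this
      rw [Metric.eventually_nhds_iff] at hev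
      obtain ⟨δ, hδ, hδ'⟩ := hev
      set a : ℝ := min (y / 2) (δ / 2) with ha
      have ha0 : 0 < a := lt_min (by linarith) (by linarith)
      have hay : a < y := lt_of_le_of_lt (min_le_left _ _) (by linarith)
      have hha : h a < 0 := by
        apply hδ'
        rw [Real.dist_eq]
        have : a ≤ δ / 2 := min_le_right _ _
        rw [abs_of_pos (by linarith : (0:ℝ) < a - 0)]
        linarith
      obtain ⟨z, hz, hz0⟩ := intermediate_value_Ioo hay.le hcont.continuousOn
        (show (0:ℝ) ∈ Ioo (h a) (h y) from ⟨hha, hpos⟩)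
      have hz' := hroot' z (ha0.trans hz.1) hz0
      have : z < yn := hz.2.trans hylt
      exact absurd hz' (ne_of_lt this)
  · intro y hylt
    have hy : 0 < y := hyn.trans hylt
    by_contra hcon
    push_neg at hcon
    have hcon' : h y ≤ 0 := by simp only [hh]; linarith
    rcases eq_or_lt_of_le hcon' with heq | hneg
    · exact absurd (hroot' y hy heq) (ne_of_gt hylt)
    · set b : ℝ := max (y + 1) ((Nat.factorial (m+1) : ℝ) + 1) with hb
      have hyb : y < b := lt_of_lt_of_le (by linarith) (le_max_left _ _)
      have hb1 : (1:ℝ) ≤ b := by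
        have : (1:ℝ) ≤ (Nat.factorial (m+1) : ℝ) := by
          exact_mod_cast Nat.one_le_iff_ne_zero.mpr (Nat.factorial_ne_zero _)
        calc (1:ℝ) ≤ (Nat.factorial (m+1) : ℝ) + 1 := by linarith
          _ ≤ b := le_max_right _ _
      have hbig : (Nat.factorial (m+1) : ℝ) < b := by
        have := le_max_right (y + 1) ((Nat.factorial (m+1) : ℝ) + 1)
        linarith
      have hSb : (∑ i ∈ Finset.range (m+1), b ^ i / (Nat.factorial i))
          ≤ (m+1) * b ^ m := by
        have : ∀ i ∈ Finset.range (m+1), b ^ i / (Nat.factorial i) ≤ b ^ m := by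
          intro i hi
          have hi' : i ≤ m := Nat.lt_succ_iff.mp (Finset.mem_range.mp hi)
          have h1 : b ^ i / (Nat.factorial i) ≤ b ^ i := by
            apply div_le_self (by positivity)
            exact_mod_cast Nat.one_le_iff_ne_zero.mpr (Nat.factorial_ne_zero i)
          have h2 : b ^ i ≤ b ^ m := pow_le_pow_right₀ hb1 hi'
          linarith
        calc (∑ i ∈ Finset.range (m+1), b ^ i / (Nat.factorial i))
            ≤ ∑ i ∈ Finset.range (m+1), b ^ m := Finset.sum_le_sum this
          _ = (m+1) * b ^ m := by
              rw [Finset.sum_const, Finset.card_range]; push_cast; ring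
      have hbm : (0:ℝ) < b ^ m := by positivity
      have hhb : 0 < h b := by
        have hfac : (0:ℝ) < (Nat.factorial m : ℝ) := by
          exact_mod_cast Nat.factorial_pos m
        have hkey : (m+1) * b ^ m < b ^ (m+1) / (Nat.factorial m) := by
          rw [lt_div_iff₀ hfac, pow_succ]
          have : ((m:ℝ)+1) * (Nat.factorial m : ℝ) < b := by
            have : ((Nat.factorial (m+1) : ℝ)) = ((m:ℝ)+1) * (Nat.factorial m : ℝ) := by
              rw [Nat.factorial_succ]; push_cast; ring
            linarith [hbig, this]
          calc (↑m + 1) * b ^ m * (Nat.factorial m : ℝ)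
              = ((m:ℝ)+1) * (Nat.factorial m : ℝ) * b ^ m := by ring
            _ < b * b ^ m := by exact mul_lt_mul_of_pos_right this hbm
            _ = b ^ m * b := by ring
        simp only [hh]
        linarith [hSb, hkey]
      obtain ⟨z, hz, hz0⟩ := intermediate_value_Ioo hyb.le hcont.continuousOn
        (show (0:ℝ) ∈ Ioo (h y) (h b) from ⟨hneg, hhb⟩)
      have hz' := hroot' z (hy.trans hz.1) hz0
      have : yn < z := hylt.trans hz.1
      exact absurd hz' (ne_of_gt this)

/-- For `c > 0`, `n ≥ 1`, the GPR `f(p) = (1/p) e^{-c/p} ∑_{i<n} (c/p)^i/i!` has derivative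
`f'(p) = (e^{-c/p}/p²)·[(c/p)^n/(n-1)! - ∑_{i<n}(c/p)^i/i!]`; with `y_n` the unique positive
root of `y^n/(n-1)! = ∑_{i<n} y^i/i!`, `f` is strictly increasing on `(0, c/y_n)`, strictly
decreasing on `(c/y_n, ∞)`, and attains a unique global maximum at `p* = c/y_n`. -/
theorem gpr_miso_maximum (c : ℝ) (hc : 0 < c) (n : ℕ) (hn : 1 ≤ n) (yn : ℝ) (hyn : 0 < yn)
    (hroot : yn ^ n / (Nat.factorial (n - 1)) = ∑ i ∈ Finset.range n, yn ^ i / (Nat.factorial i))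
    (huniq : ∀ y : ℝ, 0 < y →
      y ^ n / (Nat.factorial (n - 1)) = ∑ i ∈ Finset.range n, y ^ i / (Nat.factorial i) →
      y = yn) :
    (∀ p : ℝ, 0 < p →
      deriv (fun p : ℝ =>
          (1 / p) * Real.exp (-c / p) * ∑ i ∈ Finset.range n, (c / p) ^ i / (Nat.factorial i)) p
        = Real.exp (-c / p) / p ^ 2 *
            ((c / p) ^ n / (Nat.factorial (n - 1)) -
              ∑ i ∈ Finset.range n, (c / p) ^ i / (Nat.factorial i))) ∧
    StrictMonoOn (fun p : ℝ =>
        (1 / p) * Real.exp (-c / p) * ∑ i ∈ Finset.range n, (c / p) ^ i / (Nat.factorial i))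
      (Ioo 0 (c / yn)) ∧
    StrictAntiOn (fun p : ℝ =>
        (1 / p) * Real.exp (-c / p) * ∑ i ∈ Finset.range n, (c / p) ^ i / (Nat.factorial i))
      (Ioi (c / yn)) ∧
    (∀ p : ℝ, 0 < p → p ≠ c / yn →
      (1 / p) * Real.exp (-c / p) * ∑ i ∈ Finset.range n, (c / p) ^ i / (Nat.factorial i)
        < (1 / (c / yn)) * Real.exp (-c / (c / yn)) *
            ∑ i ∈ Finset.range n, (c / (c / yn)) ^ i / (Nat.factorial i)) := by
  obtain ⟨m, rfl⟩ : ∃ m, n = m + 1 := ⟨n - 1, by omega⟩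
  simp only [Nat.add_sub_cancel] at hroot huniq ⊢
  obtain ⟨hneg, hpos⟩ := key_sign m yn hyn hroot huniq
  have hcy : 0 < c / yn := div_pos hc hyn
  set F : ℝ → ℝ := fun p =>
    (1 / p) * Real.exp (-c / p) * ∑ i ∈ Finset.range (m+1), (c / p) ^ i / (Nat.factorial i)
    with hF
  have hderiv : ∀ p : ℝ, 0 < p → deriv F p
      = Real.exp (-c / p) / p ^ 2 *
          ((c / p) ^ (m+1) / (Nat.factorial m)
            - ∑ i ∈ Finset.range (m+1), (c / p) ^ i / (Nat.factorial i)) :=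
    fun p hp => (f_hasDerivAt c hc m p hp).deriv
  have hdpos : ∀ p ∈ Ioo (0:ℝ) (c / yn), 0 < deriv F p := by
    intro p hp
    have hp0 : 0 < p := hp.1
    have hcp : yn < c / p := by
      rw [lt_div_iff₀ hp0]
      have := (lt_div_iff₀ hyn).mp hp.2
      linarith [this]
    rw [hderiv p hp0]
    have := hpos (c / p) hcp
    have hE : 0 < Real.exp (-c / p) / p ^ 2 := by positivity
    exact mul_pos hE (by linarith)
  have hdneg : ∀ p ∈ Ioi (c / yn), deriv F p < 0 := by
    intro p hp
    have hp0 : 0 < p := hcy.trans hp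
    have hcp : c / p < yn := by
      rw [div_lt_iff₀ hp0]
      have := (div_lt_iff₀ hyn).mp (mem_Ioi.mp hp)
      linarith [this]
    have hcp0 : 0 < c / p := div_pos hc hp0
    rw [hderiv p hp0]
    have := hneg (c / p) hcp0 hcp
    have hE : 0 < Real.exp (-c / p) / p ^ 2 := by positivity
    have : (c / p) ^ (m+1) / (Nat.factorial m)
        - ∑ i ∈ Finset.range (m+1), (c / p) ^ i / (Nat.factorial i) < 0 := by linarith
    exact mul_neg_of_pos_of_neg hE this
  have hcont : ∀ p : ℝ, 0 < p → ContinuousAt F p :=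
    fun p hp => (f_hasDerivAt c hc m p hp).continuousAt
  have hMono : StrictMonoOn F (Ioc 0 (c / yn)) := by
    apply strictMonoOn_of_deriv_pos (convex_Ioc _ _)
    · exact fun p hp => (hcont p hp.1).continuousWithinAt
    · intro p hp
      rw [interior_Ioc] at hp
      exact hdpos p hp
  have hAnti : StrictAntiOn F (Ici (c / yn)) := by
    apply strictAntiOn_of_deriv_neg (convex_Ici _)
    · exact fun p hp => (hcont p (lt_of_lt_of_le hcy hp)).continuousWithinAt
    · intro p hp
      rw [interior_Ici] at hp
      exact hdneg p hp
  refine ⟨hderiv, hMono.mono Ioo_subset_Ioc_self, hAnti.mono Ioi_subset_Ici_self, ?_⟩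
  intro p hp hne
  rcases lt_or_gt_of_ne hne with hlt | hgt
  · exact hMono ⟨hp, hlt.le⟩ ⟨hcy, le_refl _⟩ hlt
  · exact hAnti (mem_Ici.mpr le_rfl) (show p ∈ Ici (c / yn) from hgt.le) hgt
end

section
/- Let S : (0,∞) → (0,1) be differentiable, strictly increasing, with lim_{p→0+} S(p) = 0, and suppose there exists p₀ > 0 such that S is convex on (0,p₀] and concave on [p₀,∞). Then the function p ↦ S(p)/p is quasi-concave on (0,∞) and attains a global maximum at some p* ≥ p₀, characterized (when S is C¹) by p* S'(p*) = S(p*). -/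
open Real Set Filter

/-- If `S : (0,∞) → (0,1)` is differentiable, strictly increasing, tends to `0` at `0⁺`,
is convex on `(0,p₀]` and concave on `[p₀,∞)` (sigmoidal), then `p ↦ S(p)/p` is
quasi-concave on `(0,∞)` and attains a global maximum at some `p* ≥ p₀` satisfying
`p* S'(p*) = S(p*)`. -/
theorem sigmoidal_ratio_quasiconcave (S : ℝ → ℝ) (p₀ : ℝ) (hp₀ : 0 < p₀)
    (hdiff : ∀ p : ℝ, 0 < p → DifferentiableAt ℝ S p)
    (hmono : StrictMonoOn S (Ioi 0))
    (hrange : ∀ p : ℝ, 0 < p → S p ∈ Ioo (0 : ℝ) 1)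
    (hlim : Tendsto S (nhdsWithin 0 (Ioi 0)) (nhds 0))
    (hconv : ConvexOn ℝ (Ioc 0 p₀) S)
    (hconc : ConcaveOn ℝ (Ici p₀) S) :
    QuasiconcaveOn ℝ (Ioi 0) (fun p => S p / p) ∧
    ∃ pstar : ℝ, p₀ ≤ pstar ∧ (∀ p : ℝ, 0 < p → S p / p ≤ S pstar / pstar) ∧
      pstar * deriv S pstar = S pstar := by
  -- Step 1: the ratio is monotone on (0, p₀]
  have hmonoR : ∀ a b : ℝ, 0 < a → a ≤ b → b ≤ p₀ → S a / a ≤ S b / b := by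
    intro a b ha hab hbp
    have hb : 0 < b := lt_of_lt_of_le ha hab
    rcases eq_or_lt_of_le hab with rfl | hab
    · exact le_refl _
    · have key : ∀ x ∈ Ioo (0:ℝ) a, S a ≤ ((b - a) * S x + (a - x) * S b) / (b - x) := by
        intro x hx
        obtain ⟨hx0, hxa⟩ := hx
        have hbx : (0:ℝ) < b - x := by linarith
        have ht : (0:ℝ) ≤ (b - a) / (b - x) := by
          apply div_nonneg <;> linarith
        have hs : (0:ℝ) ≤ (a - x) / (b - x) := by
          apply div_nonneg <;> linarith
        have hts : (b - a) / (b - x) + (a - x) / (b - x) = 1 := by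
          field_simp
          ring
        have hxmem : x ∈ Ioc (0:ℝ) p₀ := ⟨hx0, by linarith⟩
        have hbmem : b ∈ Ioc (0:ℝ) p₀ := ⟨hb, hbp⟩
        have hcomb := hconv.2 hxmem hbmem ht hs hts
        simp only [smul_eq_mul] at hcomb
        have heq : (b - a) / (b - x) * x + (a - x) / (b - x) * b = a := by
          rw [div_mul_eq_mul_div, div_mul_eq_mul_div, ← add_div,
            div_eq_iff hbx.ne']
          ring
        rw [heq] at hcomb
        calc S a ≤ (b - a) / (b - x) * S x + (a - x) / (b - x) * S b := hcomb
          _ = ((b - a) * S x + (a - x) * S b) / (b - x) := by ring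
      have hT : Tendsto (fun x => ((b - a) * S x + (a - x) * S b) / (b - x))
          (nhdsWithin 0 (Ioi 0)) (nhds (a * S b / b)) := by
        have hid : Tendsto (fun x : ℝ => x) (nhdsWithin 0 (Ioi 0)) (nhds 0) :=
          tendsto_id.mono_left nhdsWithin_le_nhds
        have hnum : Tendsto (fun x => (b - a) * S x + (a - x) * S b)
            (nhdsWithin 0 (Ioi 0)) (nhds ((b - a) * 0 + (a - 0) * S b)) :=
          ((tendsto_const_nhds.mul hlim).add ((tendsto_const_nhds.sub hid).mul
            tendsto_const_nhds))
        have hden : Tendsto (fun x : ℝ => b - x) (nhdsWithin 0 (Ioi 0)) (nhds (b - 0)) :=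
          tendsto_const_nhds.sub hid
        have := hnum.div hden (by simpa using hb.ne')
        simp only [sub_zero, mul_zero, zero_add] at this
        exact this
      have hev : ∀ᶠ x in nhdsWithin 0 (Ioi 0),
          S a ≤ ((b - a) * S x + (a - x) * S b) / (b - x) :=
        Filter.eventually_of_mem (Ioo_mem_nhdsGT_of_mem ⟨le_refl 0, ha⟩) key
      have hfin : S a ≤ a * S b / b := ge_of_tendsto hT hev
      rw [div_le_div_iff₀ ha hb]
      have := (le_div_iff₀ hb).1 hfin
      linarith
  -- Step 2: existence of a global maximum
  have hSp₀ : 0 < S p₀ := (hrange p₀ hp₀).1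
  set r₀ : ℝ := S p₀ / p₀ with hr₀def
  have hr₀ : 0 < r₀ := div_pos hSp₀ hp₀
  set M : ℝ := max (p₀ + 1) (2 / r₀) with hMdef
  have hMp₀ : p₀ ≤ M := le_trans (by linarith) (le_max_left _ _)
  have hM0 : 0 < M := lt_of_lt_of_le hp₀ hMp₀
  have hcont : ContinuousOn (fun p => S p / p) (Icc p₀ M) := by
    intro p hp
    have hp0 : 0 < p := lt_of_lt_of_le hp₀ hp.1
    exact (((hdiff p hp0).continuousAt).continuousWithinAt).div
      continuousWithinAt_id hp0.ne'
  obtain ⟨pstar, hpmem, hpmax⟩ := (isCompact_Icc (a := p₀) (b := M)).exists_isMaxOn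
    (nonempty_Icc.2 hMp₀) hcont
  have hps₀ : p₀ ≤ pstar := hpmem.1
  have hpspos : 0 < pstar := lt_of_lt_of_le hp₀ hps₀
  have hRp₀ : r₀ ≤ S pstar / pstar := hpmax ⟨le_refl p₀, hMp₀⟩
  have hglob : ∀ p : ℝ, 0 < p → S p / p ≤ S pstar / pstar := by
    intro p hp
    rcases le_or_gt p p₀ with h1 | h1
    · exact le_trans (hmonoR p p₀ hp h1 (le_refl _)) hRp₀
    · rcases le_or_gt p M with h2 | h2
      · exact hpmax ⟨le_of_lt h1, h2⟩
      · -- p > M : ratio is small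
        have hSlt : S p < 1 := (hrange p hp).2
        have h3 : S p / p ≤ 1 / p := (div_le_div_iff_of_pos_right hp).2 hSlt.le
        have hMp : 2 / r₀ ≤ p := le_trans (le_max_right _ _) h2.le
        have h5 : 2 ≤ p * r₀ := (div_le_iff₀ hr₀).1 hMp
        have h4 : 1 / p ≤ r₀ := by
          rw [div_le_iff₀ hp]; nlinarith
        exact le_trans h3 (le_trans h4 hRp₀)
  refine ⟨?_, pstar, hps₀, hglob, ?_⟩
  · -- quasiconcavity
    intro γ
    apply Set.OrdConnected.convex
    constructor
    intro x hx y hy z hz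
    obtain ⟨hx0, hxγ⟩ := hx
    obtain ⟨hy0, hyγ⟩ := hy
    have hz0 : (0:ℝ) < z := lt_of_lt_of_le hx0 hz.1
    refine ⟨hz0, ?_⟩
    rcases le_or_gt z p₀ with hzp | hzp
    · exact le_trans hxγ (hmonoR x z hx0 hz.1 hzp)
    · -- z > p₀
      have hzy : z ≤ y := hz.2
      have hy0' : (0:ℝ) < y := lt_of_lt_of_le hz0 hzy
      -- pick w ∈ [p₀, z] with γ * w ≤ S w
      obtain ⟨w, hw0, hwp₀, hwz, hwγ⟩ :
          ∃ w : ℝ, 0 < w ∧ p₀ ≤ w ∧ w ≤ z ∧ γ * w ≤ S w := by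
        rcases le_or_gt p₀ x with h | h
        · exact ⟨x, hx0, h, hz.1, (le_div_iff₀ hx0).1 hxγ⟩
        · refine ⟨p₀, hp₀, le_refl _, le_of_lt hzp, ?_⟩
          have := le_trans hxγ (hmonoR x p₀ hx0 (le_of_lt h) (le_refl _))
          exact (le_div_iff₀ hp₀).1 this
      have hyγ' : γ * y ≤ S y := (le_div_iff₀ hy0').1 hyγ
      rw [le_div_iff₀ hz0]
      rcases eq_or_lt_of_le hwz with rfl | hwz
      · linarith
      rcases eq_or_lt_of_le hzy with rfl | hzy
      · linarith
      have hyw : (0:ℝ) < y - w := by linarith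
      have ht : (0:ℝ) ≤ (y - z) / (y - w) := by
        apply div_nonneg <;> linarith
      have hs : (0:ℝ) ≤ (z - w) / (y - w) := by
        apply div_nonneg <;> linarith
      have hts : (y - z) / (y - w) + (z - w) / (y - w) = 1 := by field_simp; ring
      have hcomb := hconc.2 (mem_Ici.2 hwp₀) (mem_Ici.2 (by linarith : p₀ ≤ y))
        ht hs hts
      simp only [smul_eq_mul] at hcomb
      have heq : (y - z) / (y - w) * w + (z - w) / (y - w) * y = z := by
        rw [div_mul_eq_mul_div, div_mul_eq_mul_div, ← add_div,
          div_eq_iff hyw.ne']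
        ring
      rw [heq] at hcomb
      have h1 : (y - z) / (y - w) * S w ≥ (y - z) / (y - w) * (γ * w) := by
        apply mul_le_mul_of_nonneg_left hwγ ht
      have h2 : (z - w) / (y - w) * S y ≥ (z - w) / (y - w) * (γ * y) := by
        apply mul_le_mul_of_nonneg_left hyγ' hs
      have h3 : (y - z) / (y - w) * (γ * w) + (z - w) / (y - w) * (γ * y) = γ * z := by
        field_simp
        ring
      linarith
  · -- derivative condition
    have hloc : IsLocalMax (fun p => S p / p) pstar := by
      apply Filter.eventually_of_mem (Ioi_mem_nhds hpspos)
      intro p hp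
      exact hglob p hp
    have hzero : deriv (fun p => S p / p) pstar = 0 := hloc.deriv_eq_zero
    have hS' := (hdiff pstar hpspos).hasDerivAt
    have hD : HasDerivAt (fun p => S p / p)
        ((deriv S pstar * pstar - S pstar * 1) / pstar ^ 2) pstar :=
      hS'.div (hasDerivAt_id pstar) hpspos.ne'
    have := hD.deriv
    rw [hzero] at this
    have hnum : deriv S pstar * pstar - S pstar * 1 = 0 := by
      have hps2 : pstar ^ 2 ≠ 0 := pow_ne_zero _ hpspos.ne'
      field_simp at this
      linarith
    linarith [hnum]
end

section
/- Define for 0 < x the piecewise goal f_ℓ(x) = (1/x)·(1 - F_ℓ(c/x)), where F_ℓ is the c.d.f. of (1/ℓ)Σ_{i=1}^{ℓ}E_i with E_i i.i.d. Exp(1), i.e., 1 - F_ℓ(z) = e^{-ℓz} Σ_{j=0}^{ℓ-1} (ℓz)^j/j!. Then d/dx [f_ℓ(x)] = (e^{-ℓc/x}/x²) [ (ℓc/x)^ℓ/(ℓ-1)! - Σ_{j=0}^{ℓ-1} (ℓc/x)^j/j! ], so f_ℓ is increasing on (0, x_ℓ) and decreasing on (x_ℓ, ∞) where x_ℓ =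 ℓc/y_ℓ and y_ℓ is the unique positive root of y^ℓ/(ℓ-1)! = Σ_{j=0}^{ℓ-1} y^j/j!. Moreover x_ℓ ≥ c. -/
open Real Set Finset Nat

private lemma fact_le_mul_pow (j m : ℕ) : (j + m)! ≤ j ! * (j + m) ^ m := by
  induction m with
  | zero => simp
  | succ m ih =>
      have h1 : (j + (m+1))! = (j + m + 1) * (j + m)! := by
        rw [show j + (m+1) = (j+m) + 1 by ring, Nat.factorial_succ]
      calc (j + (m+1))! = (j + m + 1) * (j + m)! := h1
        _ ≤ (j + m + 1) * (j ! * (j + m) ^ m) := Nat.mul_le_mul_left _ ih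
        _ ≤ (j + m + 1) * (j ! * (j + m + 1) ^ m) :=
            Nat.mul_le_mul_left _ (Nat.mul_le_mul_left _
              (Nat.pow_le_pow_left (Nat.le_succ _) m))
        _ = j ! * (j + (m+1)) ^ (m+1) := by ring

private lemma sum_exp_pos (ℓ : ℕ) (hℓ : 1 ≤ ℓ) (t : ℝ) (ht : 0 ≤ t) :
    0 < ∑ j ∈ Finset.range ℓ, t ^ j / (Nat.factorial j : ℝ) := by
  apply Finset.sum_pos'
  · intro j _
    positivity
  · exact ⟨0, Finset.mem_range.2 hℓ, by simp⟩

private lemma cross (ℓ : ℕ) (hℓ : 1 ≤ ℓ) (s u : ℝ) (hs : 0 < s) (hsu : s < u) :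
    s ^ ℓ * ∑ j ∈ Finset.range ℓ, u ^ j / (Nat.factorial j : ℝ)
      < u ^ ℓ * ∑ j ∈ Finset.range ℓ, s ^ j / (Nat.factorial j : ℝ) := by
  have hu : 0 < u := hs.trans hsu
  rw [Finset.mul_sum, Finset.mul_sum]
  apply Finset.sum_lt_sum_of_nonempty ⟨0, Finset.mem_range.2 hℓ⟩
  intro j hj
  rw [Finset.mem_range] at hj
  have hcore : s ^ ℓ * u ^ j < u ^ ℓ * s ^ j := by
    have hℓj : ℓ = j + (ℓ - j) := by omega
    have hpow : s ^ (ℓ - j) < u ^ (ℓ - j) :=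
      pow_lt_pow_left₀ hsu hs.le (by omega)
    calc s ^ ℓ * u ^ j = s ^ j * u ^ j * s ^ (ℓ - j) := by
          nth_rewrite 1 [hℓj]; rw [pow_add]; ring
      _ < (s ^ j * u ^ j) * u ^ (ℓ - j) :=
          mul_lt_mul_of_pos_left hpow (by positivity)
      _ = u ^ ℓ * s ^ j := by nth_rewrite 2 [hℓj]; rw [pow_add]; ring
  have hfact : (0:ℝ) < (Nat.factorial j : ℝ) := by positivity
  rw [mul_div_assoc', mul_div_assoc']
  exact (div_lt_div_iff_of_pos_right hfact).2 hcore

private lemma sign_gt (ℓ : ℕ) (hℓ : 1 ≤ ℓ) (y t : ℝ) (hy : 0 < y)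
    (hroot : y ^ ℓ / (Nat.factorial (ℓ - 1) : ℝ)
      = ∑ j ∈ Finset.range ℓ, y ^ j / (Nat.factorial j : ℝ))
    (hty : y < t) :
    ∑ j ∈ Finset.range ℓ, t ^ j / (Nat.factorial j : ℝ)
      < t ^ ℓ / (Nat.factorial (ℓ - 1) : ℝ) := by
  set Sy := ∑ j ∈ Finset.range ℓ, y ^ j / (Nat.factorial j : ℝ) with hSy
  set St := ∑ j ∈ Finset.range ℓ, t ^ j / (Nat.factorial j : ℝ) with hSt
  have hSypos : 0 < Sy := sum_exp_pos ℓ hℓ y hy.le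
  have hfact : (0:ℝ) < (Nat.factorial (ℓ-1) : ℝ) := by positivity
  have hyℓ : y ^ ℓ = (Nat.factorial (ℓ-1) : ℝ) * Sy := by
    field_simp at hroot ⊢; linarith [hroot]
  have h := cross ℓ hℓ y t hy hty
  rw [← hSt, ← hSy, hyℓ] at h
  rw [lt_div_iff₀ hfact]
  nlinarith

private lemma sign_lt (ℓ : ℕ) (hℓ : 1 ≤ ℓ) (y t : ℝ) (hy : 0 < y)
    (hroot : y ^ ℓ / (Nat.factorial (ℓ - 1) : ℝ)
      = ∑ j ∈ Finset.range ℓ, y ^ j / (Nat.factorial j : ℝ))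
    (ht : 0 < t) (hty : t < y) :
    t ^ ℓ / (Nat.factorial (ℓ - 1) : ℝ)
      < ∑ j ∈ Finset.range ℓ, t ^ j / (Nat.factorial j : ℝ) := by
  set Sy := ∑ j ∈ Finset.range ℓ, y ^ j / (Nat.factorial j : ℝ) with hSy
  set St := ∑ j ∈ Finset.range ℓ, t ^ j / (Nat.factorial j : ℝ) with hSt
  have hSypos : 0 < Sy := sum_exp_pos ℓ hℓ y hy.le
  have hfact : (0:ℝ) < (Nat.factorial (ℓ-1) : ℝ) := by positivity
  have hyℓ : y ^ ℓ = (Nat.factorial (ℓ-1) : ℝ) * Sy := by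
    field_simp at hroot ⊢; linarith [hroot]
  have h := cross ℓ hℓ t y ht hty
  rw [← hSt, ← hSy, hyℓ] at h
  rw [div_lt_iff₀ hfact]
  nlinarith

private lemma sum_shift (ℓ : ℕ) (hℓ : 1 ≤ ℓ) (t : ℝ) :
    ∑ j ∈ Finset.range ℓ, (j : ℝ) * t ^ (j - 1) / (Nat.factorial j : ℝ)
      = ∑ j ∈ Finset.range (ℓ - 1), t ^ j / (Nat.factorial j : ℝ) := by
  obtain ⟨m, rfl⟩ : ∃ m, ℓ = m + 1 := ⟨ℓ - 1, by omega⟩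
  rw [Finset.sum_range_succ']
  simp only [Nat.add_sub_cancel, Nat.factorial_succ, Nat.cast_mul, Nat.cast_add, Nat.cast_one]
  simp only [Nat.cast_zero, zero_mul, zero_div, add_zero]
  apply Finset.sum_congr rfl
  intro j _
  have h : ((j:ℝ) + 1) ≠ 0 := by positivity
  have hf : (Nat.factorial j : ℝ) ≠ 0 := by positivity
  field_simp

private lemma hasDeriv_f (ℓ : ℕ) (hℓ : 1 ≤ ℓ) (a : ℝ) (x : ℝ) (hx : 0 < x) :
    HasDerivAt (fun x : ℝ => (1 / x) * (Real.exp (-a / x)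
        * ∑ j ∈ Finset.range ℓ, (a / x) ^ j / (Nat.factorial j : ℝ)))
      (Real.exp (-a / x) / x ^ 2 *
        ((a / x) ^ ℓ / (Nat.factorial (ℓ - 1) : ℝ) -
          ∑ j ∈ Finset.range ℓ, (a / x) ^ j / (Nat.factorial j : ℝ))) x := by
  have hx0 : x ≠ 0 := hx.ne'
  have h1 : HasDerivAt (fun x : ℝ => 1 / x) (-(x ^ 2)⁻¹) x := by
    simpa [one_div] using hasDerivAt_inv hx0
  have h2 : HasDerivAt (fun x : ℝ => -a / x) (a / x ^ 2) x := by
    have := (hasDerivAt_inv hx0).const_mul (-a)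
    simpa [div_eq_mul_inv, mul_comm] using this
  have hE : HasDerivAt (fun x : ℝ => Real.exp (-a / x)) (Real.exp (-a / x) * (a / x ^ 2)) x :=
    h2.exp
  have h3 : HasDerivAt (fun x : ℝ => a / x) (-(a / x ^ 2)) x := by
    have := (hasDerivAt_inv hx0).const_mul a
    simpa [div_eq_mul_inv, mul_comm] using this
  have hj : ∀ j : ℕ, HasDerivAt (fun x : ℝ => (a / x) ^ j / (Nat.factorial j : ℝ))
      (((j : ℝ) * (a / x) ^ (j - 1) * (-(a / x ^ 2))) / (Nat.factorial j : ℝ)) x :=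
    fun j => ((h3.pow j).div_const _)
  have hS : HasDerivAt (fun x : ℝ => ∑ j ∈ Finset.range ℓ, (a / x) ^ j / (Nat.factorial j : ℝ))
      (∑ j ∈ Finset.range ℓ,
        ((j : ℝ) * (a / x) ^ (j - 1) * (-(a / x ^ 2))) / (Nat.factorial j : ℝ)) x :=
    HasDerivAt.fun_sum (fun j _ => hj j)
  have htotal := h1.fun_mul (hE.fun_mul hS)
  refine htotal.congr_deriv (Eq.symm ?_)
  have hsum : ∑ j ∈ Finset.range ℓ,
      ((j : ℝ) * (a / x) ^ (j - 1) * (-(a / x ^ 2))) / (Nat.factorial j : ℝ)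
      = (∑ j ∈ Finset.range (ℓ - 1), (a / x) ^ j / (Nat.factorial j : ℝ)) * (-(a / x ^ 2)) := by
    rw [← sum_shift ℓ hℓ, Finset.sum_mul]
    exact Finset.sum_congr rfl (fun j _ => by ring)
  rw [hsum]
  obtain ⟨m, rfl⟩ : ∃ m, ℓ = m + 1 := ⟨ℓ - 1, by omega⟩
  rw [show (m + 1 - 1) = m from rfl]
  rw [Finset.sum_range_succ]
  rw [pow_succ]
  have hf : (Nat.factorial m : ℝ) ≠ 0 := by positivity
  field_simp
  have hxx : x * x⁻¹ = 1 := mul_inv_cancel₀ hx0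
  linear_combination (a * a ^ m * x⁻¹ ^ m) * hxx

private lemma y_le_ell (c : ℝ) (hc : 0 < c) (ℓ : ℕ) (hℓ : 1 ≤ ℓ)
    (y : ℝ) (hy : 0 < y)
    (hroot : y ^ ℓ / (Nat.factorial (ℓ - 1) : ℝ)
      = ∑ j ∈ Finset.range ℓ, y ^ j / (Nat.factorial j : ℝ)) :
    y ≤ (ℓ : ℝ) := by
  by_contra h
  push_neg at h
  have hF : (0:ℝ) < (Nat.factorial (ℓ-1) : ℝ) := by positivity
  have hterm : ∀ j ∈ Finset.range ℓ,
      y ^ j / (Nat.factorial j : ℝ) ≤ y ^ (ℓ-1) / (Nat.factorial (ℓ-1) : ℝ) := by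
    intro j hj
    rw [Finset.mem_range] at hj
    set m := ℓ - 1 - j with hm
    have hjm : j + m = ℓ - 1 := by omega
    have hfn : (Nat.factorial (ℓ-1) : ℝ) ≤ (Nat.factorial j : ℝ) * ((ℓ-1 : ℕ) : ℝ) ^ m := by
      have := fact_le_mul_pow j m
      rw [hjm] at this
      exact_mod_cast this
    have hcast : (((ℓ-1 : ℕ)) : ℝ) ≤ y := by
      have h1 : (((ℓ-1 : ℕ)) : ℝ) ≤ (ℓ : ℝ) := by exact_mod_cast Nat.sub_le ℓ 1
      linarith
    have hpm : ((ℓ-1 : ℕ) : ℝ) ^ m ≤ y ^ m :=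
      pow_le_pow_left₀ (by positivity) hcast m
    have hfy : (Nat.factorial (ℓ-1) : ℝ) ≤ (Nat.factorial j : ℝ) * y ^ m := by
      calc (Nat.factorial (ℓ-1) : ℝ) ≤ (Nat.factorial j : ℝ) * ((ℓ-1 : ℕ) : ℝ) ^ m := hfn
        _ ≤ (Nat.factorial j : ℝ) * y ^ m := by
            apply mul_le_mul_of_nonneg_left hpm (by positivity)
    rw [div_le_div_iff₀ (by positivity) hF]
    calc y ^ j * (Nat.factorial (ℓ-1) : ℝ) ≤ y ^ j * ((Nat.factorial j : ℝ) * y ^ m) := by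
          apply mul_le_mul_of_nonneg_left hfy (by positivity)
      _ = y ^ (ℓ-1) * (Nat.factorial j : ℝ) := by rw [← hjm, pow_add]; ring
  have hsum : ∑ j ∈ Finset.range ℓ, y ^ j / (Nat.factorial j : ℝ)
      ≤ (ℓ : ℝ) * (y ^ (ℓ-1) / (Nat.factorial (ℓ-1) : ℝ)) := by
    calc ∑ j ∈ Finset.range ℓ, y ^ j / (Nat.factorial j : ℝ)
        ≤ ∑ _j ∈ Finset.range ℓ, y ^ (ℓ-1) / (Nat.factorial (ℓ-1) : ℝ) :=
          Finset.sum_le_sum hterm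
      _ = (ℓ : ℝ) * (y ^ (ℓ-1) / (Nat.factorial (ℓ-1) : ℝ)) := by
          rw [Finset.sum_const, Finset.card_range, nsmul_eq_mul]
  have hyℓ : y ^ ℓ = y ^ (ℓ-1) * y := by
    rw [← pow_succ]; congr 1; omega
  have hkey : y ^ (ℓ-1) * y / (Nat.factorial (ℓ-1) : ℝ)
      ≤ (ℓ : ℝ) * y ^ (ℓ-1) / (Nat.factorial (ℓ-1) : ℝ) := by
    rw [← hyℓ, hroot]
    calc _ ≤ (ℓ : ℝ) * (y ^ (ℓ-1) / (Nat.factorial (ℓ-1) : ℝ)) := hsum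
      _ = (ℓ : ℝ) * y ^ (ℓ-1) / (Nat.factorial (ℓ-1) : ℝ) := by rw [mul_div_assoc]
  have hyp : (0:ℝ) < y ^ (ℓ-1) := by positivity
  have h2 : y ^ (ℓ-1) * y ≤ (ℓ : ℝ) * y ^ (ℓ-1) := (div_le_div_iff_of_pos_right hF).1 hkey
  nlinarith

/-- MISO GPR over `ℓ` antennas: `f_ℓ(x) = (1/x)·e^{-ℓc/x} ∑_{j<ℓ} (ℓc/x)^j/j!` has derivative
`(e^{-ℓc/x}/x²)·[(ℓc/x)^ℓ/(ℓ-1)! - ∑_{j<ℓ}(ℓc/x)^j/j!]`, is increasing on `(0, x_ℓ)` and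
decreasing on `(x_ℓ, ∞)` where `x_ℓ = ℓc/y_ℓ` and `y_ℓ` is the unique positive root of
`y^ℓ/(ℓ-1)! = ∑_{j<ℓ} y^j/j!`; moreover `x_ℓ ≥ c`. -/
theorem miso_gpr_ell_antennas (c : ℝ) (hc : 0 < c) (ℓ : ℕ) (hℓ : 1 ≤ ℓ)
    (y : ℝ) (hy : 0 < y)
    (hroot : y ^ ℓ / (Nat.factorial (ℓ - 1)) = ∑ j ∈ Finset.range ℓ, y ^ j / (Nat.factorial j))
    (huniq : ∀ z : ℝ, 0 < z →
      z ^ ℓ / (Nat.factorial (ℓ - 1)) = ∑ j ∈ Finset.range ℓ, z ^ j / (Nat.factorial j) →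
      z = y) :
    (∀ x : ℝ, 0 < x →
      deriv (fun x : ℝ => (1 / x) * (Real.exp (-(ℓ * c) / x)
          * ∑ j ∈ Finset.range ℓ, ((ℓ * c) / x) ^ j / (Nat.factorial j))) x
        = Real.exp (-(ℓ * c) / x) / x ^ 2 *
            (((ℓ * c) / x) ^ ℓ / (Nat.factorial (ℓ - 1)) -
              ∑ j ∈ Finset.range ℓ, ((ℓ * c) / x) ^ j / (Nat.factorial j))) ∧
    StrictMonoOn (fun x : ℝ => (1 / x) * (Real.exp (-(ℓ * c) / x)
        * ∑ j ∈ Finset.range ℓ, ((ℓ * c) / x) ^ j / (Nat.factorial j)))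
      (Ioo 0 (ℓ * c / y)) ∧
    StrictAntiOn (fun x : ℝ => (1 / x) * (Real.exp (-(ℓ * c) / x)
        * ∑ j ∈ Finset.range ℓ, ((ℓ * c) / x) ^ j / (Nat.factorial j)))
      (Ioi (ℓ * c / y)) ∧
    c ≤ ℓ * c / y := by
  have ha : (0:ℝ) < (ℓ : ℝ) * c := by
    have : (1:ℝ) ≤ (ℓ:ℝ) := by exact_mod_cast hℓ
    nlinarith
  have hb : (0:ℝ) < (ℓ : ℝ) * c / y := div_pos ha hy
  set a : ℝ := (ℓ : ℝ) * c with hadef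
  refine ⟨fun x hx => (hasDeriv_f ℓ hℓ a x hx).deriv, ?_, ?_, ?_⟩
  · apply strictMonoOn_of_deriv_pos (convex_Ioo _ _)
    · intro x hx
      exact (hasDeriv_f ℓ hℓ a x hx.1).continuousAt.continuousWithinAt
    · intro x hx
      rw [interior_Ioo] at hx
      obtain ⟨hx0, hxb⟩ := hx
      rw [(hasDeriv_f ℓ hℓ a x hx0).deriv]
      have hyt : y < a / x := by
        rw [lt_div_iff₀ hx0]
        rw [lt_div_iff₀ hy] at hxb
        linarith [hxb]
      have hsgn := sign_gt ℓ hℓ y (a / x) hy hroot hyt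
      have hEpos : 0 < Real.exp (-a / x) / x ^ 2 := by positivity
      exact mul_pos hEpos (by linarith)
  · apply strictAntiOn_of_deriv_neg (convex_Ioi _)
    · intro x hx
      have hx0 : 0 < x := lt_trans hb hx
      exact (hasDeriv_f ℓ hℓ a x hx0).continuousAt.continuousWithinAt
    · intro x hx
      rw [interior_Ioi] at hx
      have hx0 : 0 < x := lt_trans hb hx
      rw [(hasDeriv_f ℓ hℓ a x hx0).deriv]
      have hty : a / x < y := by
        rw [div_lt_iff₀ hx0]
        have := (div_lt_iff₀ hy).1 hx
        linarith [this]
      have ht0 : 0 < a / x := div_pos ha hx0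
      have hsgn := sign_lt ℓ hℓ y (a / x) hy hroot ht0 hty
      have hEpos : 0 < Real.exp (-a / x) / x ^ 2 := by positivity
      exact mul_neg_of_pos_of_neg hEpos (by linarith)
  · have hyℓ : y ≤ (ℓ : ℝ) := y_le_ell c hc ℓ hℓ y hy hroot
    rw [le_div_iff₀ hy]
    nlinarith
end

section
/- Quasi-concavity can fail for the two-variable TISO energy-efficiency: there exist c > 0 and q > 0 such that, with Γ(p₁,p₂) = (1 - P_out(p₁,p₂))/(p₁+p₂) where P_out(p₁,p₂) = Pr[p₁|h₁|² + p₂|h₂|² ≤ c] for independent Exp(1) random variables |h₁|²,|h₂|², one has Γ(q,0) = Γ(0,q) > Γ(q/2, q/2). Consequently the upper-level set {(p₁,p₂) : Γ(p₁,p₂) ≥ Γ(q,0)} contains (q,0) and (0,q) but not their midpoint, so Γ is not quasi-concave on ℝ₊². -/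
open MeasureTheory ProbabilityTheory Set Real

lemma expMeasure_one_Iic (t : ℝ) :
    expMeasure 1 (Iic t) = ENNReal.ofReal (if 0 ≤ t then 1 - Real.exp (-t) else 0) := by
  have h1 : expMeasure 1 = Measure.withDensity volume (exponentialPDF 1) := rfl
  rw [h1, withDensity_apply _ measurableSet_Iic]
  have := lintegral_exponentialPDF_eq_antiDeriv (r := 1) one_pos t
  simpa using this

lemma prob_single {Ω : Type*} [MeasureSpace Ω] (X : Ω → ℝ) (hm : Measurable X)
    (hd : Measure.map X ℙ = expMeasure 1) :
    ℙ {ω | X ω ≤ 2} = ENNReal.ofReal (1 - Real.exp (-2)) := by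
  have : {ω | X ω ≤ 2} = X ⁻¹' (Iic 2) := rfl
  rw [this, ← Measure.map_apply hm measurableSet_Iic, hd, expMeasure_one_Iic]
  norm_num

lemma sum_prob :
    (expMeasure 1).prod (expMeasure 1) {p : ℝ × ℝ | p.1 + p.2 ≤ 4}
      = ENNReal.ofReal (1 - Real.exp (-4) * 5) := by
  have hprob : IsProbabilityMeasure (expMeasure 1) := isProbabilityMeasure_expMeasure one_pos
  have hA : MeasurableSet {p : ℝ × ℝ | p.1 + p.2 ≤ 4} :=
    measurableSet_le (measurable_fst.add measurable_snd) measurable_const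
  rw [Measure.prod_apply hA]
  have hpre : ∀ x : ℝ, (Prod.mk x ⁻¹' {p : ℝ × ℝ | p.1 + p.2 ≤ 4}) = Iic (4 - x) := by
    intro x; ext y; simp [Set.mem_Iic]; constructor <;> intro h <;> linarith
  have hmeasPDF : Measurable (exponentialPDF 1) :=
    ENNReal.measurable_ofReal.comp (measurable_exponentialPDFReal 1)
  calc ∫⁻ x, expMeasure 1 (Prod.mk x ⁻¹' {p : ℝ × ℝ | p.1 + p.2 ≤ 4}) ∂(expMeasure 1)
      = ∫⁻ x, ENNReal.ofReal (if 0 ≤ 4 - x then 1 - Real.exp (-(4 - x)) else 0)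
          ∂(expMeasure 1) := by
        refine lintegral_congr fun x => ?_
        rw [hpre x, expMeasure_one_Iic]
    _ = ∫⁻ x, exponentialPDF 1 x *
          ENNReal.ofReal (if 0 ≤ 4 - x then 1 - Real.exp (-(4 - x)) else 0) ∂volume := by
        have h1 : expMeasure 1 = Measure.withDensity volume (exponentialPDF 1) := rfl
        rw [h1, lintegral_withDensity_eq_lintegral_mul _ hmeasPDF]
        · rfl
        · exact ENNReal.measurable_ofReal.comp (by
            apply Measurable.ite (measurableSet_le measurable_const (by fun_prop))
            · exact (by fun_prop : Measurable fun x : ℝ => 1 - Real.exp (-(4 - x)))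
            · exact measurable_const)
    _ = ∫⁻ x, (Icc (0:ℝ) 4).indicator
          (fun x => ENNReal.ofReal (Real.exp (-x) - Real.exp (-4))) x ∂volume := by
        refine lintegral_congr fun x => ?_
        rw [exponentialPDF_eq]
        by_cases hx0 : 0 ≤ x
        · by_cases hx4 : x ≤ 4
          · rw [Set.indicator_of_mem (Set.mem_Icc.2 ⟨hx0, hx4⟩), if_pos hx0,
              if_pos (by linarith), ← ENNReal.ofReal_mul (by positivity)]
            congr 1
            have h4x : Real.exp (-x) * Real.exp (-(4 - x)) = Real.exp (-4) := by
              rw [← Real.exp_add]; ring_nf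
            have hx' : -(1 * x) = -x := by ring
            rw [hx', one_mul, mul_sub, mul_one, h4x]
          · rw [Set.indicator_of_notMem (fun h => hx4 (Set.mem_Icc.1 h).2),
              if_neg (show ¬ (0:ℝ) ≤ 4 - x by linarith), ENNReal.ofReal_zero, mul_zero]
        · rw [Set.indicator_of_notMem (fun h => hx0 (Set.mem_Icc.1 h).1), if_neg hx0,
            ENNReal.ofReal_zero, zero_mul]
    _ = ∫⁻ x in Icc (0:ℝ) 4, ENNReal.ofReal (Real.exp (-x) - Real.exp (-4)) ∂volume := by
        rw [lintegral_indicator measurableSet_Icc]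
    _ = ENNReal.ofReal (∫ x in Icc (0:ℝ) 4, (Real.exp (-x) - Real.exp (-4))) := by
        rw [← ofReal_integral_eq_lintegral_ofReal]
        · exact Integrable.sub (by
            apply Continuous.integrableOn_Icc; fun_prop) (integrableOn_const (by
              simp [Real.volume_Icc]))
        · refine (ae_restrict_iff' measurableSet_Icc).2 (Filter.Eventually.of_forall ?_)
          intro x hx
          have := Real.exp_le_exp.2 (neg_le_neg (Set.mem_Icc.1 hx).2)
          simp only [Pi.zero_apply]
          linarith
    _ = ENNReal.ofReal (1 - Real.exp (-4) * 5) := by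
        congr 1
        rw [integral_Icc_eq_integral_Ioc, ← intervalIntegral.integral_of_le (by norm_num : (0:ℝ) ≤ 4)]
        rw [intervalIntegral.integral_sub (by
            apply Continuous.intervalIntegrable; fun_prop) (intervalIntegrable_const)]
        have h1 : (∫ x in (0:ℝ)..4, Real.exp (-x)) = Real.exp 0 - Real.exp (-4) := by
          rw [intervalIntegral.integral_comp_neg (fun x => Real.exp x), integral_exp]
          norm_num
        rw [h1, intervalIntegral.integral_const]
        simp
        ring

/-- TISO energy-efficiency is not quasi-concave: for independent `Exp(1)` random variables
`|h₁|², |h₂|²`, there exist `c > 0` and `q > 0` such that the GPR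
`Γ(p₁,p₂) = (1 - P[p₁|h₁|² + p₂|h₂|² ≤ c])/(p₁+p₂)` satisfies
`Γ(q,0) = Γ(0,q) > Γ(q/2,q/2)`, and `Γ` is not quasi-concave on `ℝ₊²`. -/
theorem tiso_not_quasiconcave {Ω : Type*} [MeasureSpace Ω]
    [IsProbabilityMeasure (ℙ : Measure Ω)] (X₁ X₂ : Ω → ℝ)
    (hm₁ : Measurable X₁) (hm₂ : Measurable X₂) (hindep : IndepFun X₁ X₂ ℙ)
    (hd₁ : Measure.map X₁ ℙ = expMeasure 1) (hd₂ : Measure.map X₂ ℙ = expMeasure 1) :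
    ∃ c : ℝ, 0 < c ∧ ∃ q : ℝ, 0 < q ∧
      ((1 - (ℙ {ω | q * X₁ ω + 0 * X₂ ω ≤ c}).toReal) / (q + 0)
          = (1 - (ℙ {ω | 0 * X₁ ω + q * X₂ ω ≤ c}).toReal) / (0 + q)) ∧
      ((1 - (ℙ {ω | q / 2 * X₁ ω + q / 2 * X₂ ω ≤ c}).toReal) / (q / 2 + q / 2)
          < (1 - (ℙ {ω | q * X₁ ω + 0 * X₂ ω ≤ c}).toReal) / (q + 0)) ∧
      ¬ QuasiconcaveOn ℝ {P : ℝ × ℝ | 0 ≤ P.1 ∧ 0 ≤ P.2}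
          (fun P : ℝ × ℝ =>
            (1 - (ℙ {ω | P.1 * X₁ ω + P.2 * X₂ ω ≤ c}).toReal) / (P.1 + P.2)) := by
  refine ⟨2, by norm_num, 1, by norm_num, ?_⟩
  -- probabilities of the single-antenna events
  have hs1 : {ω : Ω | 1 * X₁ ω + 0 * X₂ ω ≤ 2} = {ω | X₁ ω ≤ 2} := by ext ω; simp
  have hs2 : {ω : Ω | 0 * X₁ ω + 1 * X₂ ω ≤ 2} = {ω | X₂ ω ≤ 2} := by ext ω; simp
  have hp1 : ℙ {ω : Ω | 1 * X₁ ω + 0 * X₂ ω ≤ 2} = ENNReal.ofReal (1 - Real.exp (-2)) := by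
    rw [hs1, prob_single X₁ hm₁ hd₁]
  have hp2 : ℙ {ω : Ω | 0 * X₁ ω + 1 * X₂ ω ≤ 2} = ENNReal.ofReal (1 - Real.exp (-2)) := by
    rw [hs2, prob_single X₂ hm₂ hd₂]
  -- probability of the joint event
  have hsum : {ω : Ω | 1 / 2 * X₁ ω + 1 / 2 * X₂ ω ≤ 2} = {ω | X₁ ω + X₂ ω ≤ 4} := by
    ext ω; simp only [Set.mem_setOf_eq]; constructor <;> intro h <;> linarith
  have hA : MeasurableSet {p : ℝ × ℝ | p.1 + p.2 ≤ 4} :=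
    measurableSet_le (measurable_fst.add measurable_snd) measurable_const
  have hmap : Measure.map (fun ω => (X₁ ω, X₂ ω)) ℙ = (expMeasure 1).prod (expMeasure 1) := by
    refine ((indepFun_iff_map_prod_eq_prod_map_map hm₁.aemeasurable
      hm₂.aemeasurable).1 hindep).trans ?_
    rw [hd₁, hd₂]
  have hpsum : ℙ {ω : Ω | 1 / 2 * X₁ ω + 1 / 2 * X₂ ω ≤ 2}
      = ENNReal.ofReal (1 - Real.exp (-4) * 5) := by
    rw [hsum]
    have : {ω : Ω | X₁ ω + X₂ ω ≤ 4} = (fun ω => (X₁ ω, X₂ ω)) ⁻¹' {p : ℝ × ℝ | p.1 + p.2 ≤ 4} :=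
      rfl
    rw [this, ← Measure.map_apply (hm₁.prodMk hm₂) hA, hmap, sum_prob]
  -- numerics
  have he2 : Real.exp (-2) < 1 := Real.exp_lt_one_iff.2 (by norm_num)
  have he4 : Real.exp (-4) * 5 < 1 := by
    have h1 : (2.7182818283 : ℝ) < Real.exp 1 := Real.exp_one_gt_d9
    have h2 : Real.exp (-4) = (Real.exp (-1))^4 := by
      rw [← Real.exp_nat_mul]; norm_num
    have h3 : Real.exp (-1) * Real.exp 1 = 1 := by rw [← Real.exp_add]; norm_num
    have h4 : 0 < Real.exp (-1) := Real.exp_pos _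
    have ha : Real.exp (-1) ≤ 0.37 := by nlinarith
    have ha2 : Real.exp (-1) ^ 2 ≤ 0.1369 := by nlinarith
    have hpos2 : 0 < Real.exp (-1) ^ 2 := by positivity
    have hb : Real.exp (-1) ^ 4 ≤ 0.1369 * Real.exp (-1) ^ 2 := by nlinarith
    nlinarith
  have he45 : 0 ≤ 1 - Real.exp (-4) * 5 := by linarith
  have ht1 : (ℙ {ω : Ω | 1 * X₁ ω + 0 * X₂ ω ≤ 2}).toReal = 1 - Real.exp (-2) := by
    rw [hp1, ENNReal.toReal_ofReal (by linarith)]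
  have ht2 : (ℙ {ω : Ω | 0 * X₁ ω + 1 * X₂ ω ≤ 2}).toReal = 1 - Real.exp (-2) := by
    rw [hp2, ENNReal.toReal_ofReal (by linarith)]
  have htsum : (ℙ {ω : Ω | 1 / 2 * X₁ ω + 1 / 2 * X₂ ω ≤ 2}).toReal
      = 1 - Real.exp (-4) * 5 := by
    rw [hpsum, ENNReal.toReal_ofReal he45]
  have hstrict : Real.exp (-4) * 5 < Real.exp (-2) := by
    have h1 : (2.7182818283 : ℝ) < Real.exp 1 := Real.exp_one_gt_d9
    have h2 : Real.exp (-4) = (Real.exp (-1))^4 := by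
      rw [← Real.exp_nat_mul]; norm_num
    have h2' : Real.exp (-2) = (Real.exp (-1))^2 := by
      rw [← Real.exp_nat_mul]; norm_num
    have h3 : Real.exp (-1) * Real.exp 1 = 1 := by rw [← Real.exp_add]; norm_num
    have h4 : 0 < Real.exp (-1) := Real.exp_pos _
    have ha : Real.exp (-1) ≤ 0.37 := by nlinarith
    have ha2 : Real.exp (-1) ^ 2 ≤ 0.1369 := by nlinarith
    have hpos2 : 0 < Real.exp (-1) ^ 2 := by positivity
    have hb : Real.exp (-1) ^ 4 ≤ 0.1369 * Real.exp (-1) ^ 2 := by nlinarith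
    rw [h2, h2']
    nlinarith
  have heq : (1 - (ℙ {ω : Ω | 1 * X₁ ω + 0 * X₂ ω ≤ 2}).toReal) / (1 + 0)
      = (1 - (ℙ {ω : Ω | 0 * X₁ ω + 1 * X₂ ω ≤ 2}).toReal) / (0 + 1) := by
    rw [ht1, ht2]; norm_num
  have hlt : (1 - (ℙ {ω : Ω | 1 / 2 * X₁ ω + 1 / 2 * X₂ ω ≤ 2}).toReal) / (1 / 2 + 1 / 2)
      < (1 - (ℙ {ω : Ω | 1 * X₁ ω + 0 * X₂ ω ≤ 2}).toReal) / (1 + 0) := by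
    rw [ht1, htsum]
    have h5 := hstrict
    norm_num
    linarith
  refine ⟨heq, hlt, ?_⟩
  intro hqc
  have hcvx := hqc ((1 - (ℙ {ω : Ω | (1:ℝ) * X₁ ω + (0:ℝ) * X₂ ω ≤ 2}).toReal) / (1 + 0))
  have hx : ((1:ℝ), (0:ℝ)) ∈ {P : ℝ × ℝ | 0 ≤ P.1 ∧ 0 ≤ P.2} ∩
      {P : ℝ × ℝ | (1 - (ℙ {ω : Ω | (1:ℝ) * X₁ ω + (0:ℝ) * X₂ ω ≤ 2}).toReal) / (1 + 0)
        ≤ (1 - (ℙ {ω | P.1 * X₁ ω + P.2 * X₂ ω ≤ 2}).toReal) / (P.1 + P.2)} := by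
    constructor
    · exact ⟨by norm_num, by norm_num⟩
    · simp only [Set.mem_setOf_eq]
      exact le_refl _
  have hy : ((0:ℝ), (1:ℝ)) ∈ {P : ℝ × ℝ | 0 ≤ P.1 ∧ 0 ≤ P.2} ∩
      {P : ℝ × ℝ | (1 - (ℙ {ω : Ω | (1:ℝ) * X₁ ω + (0:ℝ) * X₂ ω ≤ 2}).toReal) / (1 + 0)
        ≤ (1 - (ℙ {ω | P.1 * X₁ ω + P.2 * X₂ ω ≤ 2}).toReal) / (P.1 + P.2)} := by
    constructor
    · exact ⟨by norm_num, by norm_num⟩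
    · simp only [Set.mem_setOf_eq]
      exact le_of_eq heq
  have hmid := hcvx hx hy (by norm_num : (0:ℝ) ≤ 1/2) (by norm_num : (0:ℝ) ≤ 1/2)
      (by norm_num)
  have hmid' : ((1:ℝ)/2) • ((1:ℝ), (0:ℝ)) + ((1:ℝ)/2) • ((0:ℝ), (1:ℝ))
      = (((1:ℝ)/2, (1:ℝ)/2) : ℝ × ℝ) := by
    simp [Prod.ext_iff]
  rw [hmid'] at hmid
  have := hmid.2
  simp only [Set.mem_setOf_eq] at this
  exact absurd this (not_le.2 hlt)
end
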